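/- Assume Souslin's Hypothesis, i.e. that every ccc linearly ordered topological space is separable. If a compact Hausdorff space X which is a continuous image of some compact linearly ordered topological space contains no dense metrizable subspace, then X contains an uncountable discrete subspace. -/

import Mathlib

universe u

open Set Topology

/-- The character of a space `X` at a point `x`: the least cardinality of a
neighborhood base of `X` at `x`. -/
noncomputable def nhdsChar (X : Type u) [TopologicalSpace X] (x : X) : Cardinal.{u} :=
  sInf { c | ∃ B : Set (Set X), Cardinal.mk B = c ∧ (∀ U ∈ B, U ∈ nhds x) ∧
      ∀ V ∈ nhds x, ∃ U ∈ B, U ⊆ V }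

/-- The character of a space: `χ(X) = sup_{x ∈ X} χ(x, X)`. -/
noncomputable def spaceChar (X : Type u) [TopologicalSpace X] : Cardinal.{u} :=
  ⨆ x : X, nhdsChar X x

/-- The cellularity of a space: the supremum of cardinalities of pairwise disjoint
families of nonempty open subsets. -/
noncomputable def cellularity (X : Type u) [TopologicalSpace X] : Cardinal.{u} :=
  sSup { c | ∃ 𝒰 : Set (Set X), Cardinal.mk 𝒰 = c ∧ (∀ U ∈ 𝒰, IsOpen U ∧ U.Nonempty) ∧
      𝒰.PairwiseDisjoint id }

/-- The density of a space: the least cardinality of a dense subset. -/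
noncomputable def density (X : Type u) [TopologicalSpace X] : Cardinal.{u} :=
  sInf { c | ∃ D : Set X, Cardinal.mk D = c ∧ Dense D }

/-- The weight of a space: the least cardinality of a base for the topology. -/
noncomputable def weight (X : Type u) [TopologicalSpace X] : Cardinal.{u} :=
  sInf { c | ∃ B : Set (Set X), Cardinal.mk B = c ∧ TopologicalSpace.IsTopologicalBasis B }

/-- A surjective map is irreducible if no proper closed subset maps onto the codomain. -/
def IsIrreducibleMap {K : Type*} {X : Type*} [TopologicalSpace K] [TopologicalSpace X]
    (f : K → X) : Prop :=
  Function.Surjective f ∧ ∀ A : Set K, IsClosed A → A ≠ univ → f '' A ≠ univ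

/-- `C` is an order component of `A`: a maximal convex subset of `A`. -/
def IsOrderComponent {K : Type*} [LinearOrder K] (A C : Set K) : Prop :=
  C ⊆ A ∧ C.OrdConnected ∧ ∀ C' : Set K, C ⊆ C' → C' ⊆ A → C'.OrdConnected → C' = C

/-- A map from a linearly ordered set is order-light if every order component of every
fiber is a singleton. -/
def OrderLight {K : Type*} {X : Type*} [LinearOrder K] (f : K → X) : Prop :=
  ∀ x : X, ∀ C : Set K, IsOrderComponent (f ⁻¹' {x}) C → ∃ k, C = {k}

/-- The countable chain condition: every pairwise disjoint family of nonempty open sets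
is countable. -/
def CCC (X : Type*) [TopologicalSpace X] : Prop :=
  ∀ 𝒰 : Set (Set X), (∀ U ∈ 𝒰, IsOpen U ∧ U.Nonempty) → 𝒰.PairwiseDisjoint id → 𝒰.Countable

/-- A space is non-archimedean if it has a base any two members of which are either
disjoint or comparable by inclusion. -/
def NonArchimedean (X : Type*) [TopologicalSpace X] : Prop :=
  ∃ B : Set (Set X), TopologicalSpace.IsTopologicalBasis B ∧
    ∀ U ∈ B, ∀ V ∈ B, Disjoint U V ∨ U ⊆ V ∨ V ⊆ U

/-- A space is perfectly normal if it is normal and every closed set is a Gδ-set. -/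
def PerfNormal (X : Type*) [TopologicalSpace X] : Prop :=
  NormalSpace X ∧ ∀ A : Set X, IsClosed A → IsGδ A

/-- `X` is a continuous image of some compact linearly ordered topological space
(a linearly ordered set equipped with its order topology). -/
def ContinuousImageOfCompactLOTS (X : Type u) [TopologicalSpace X] : Prop :=
  ∃ (K : Type u) (lo : LinearOrder K) (tK : TopologicalSpace K),
    letI := lo; letI := tK;
    OrderTopology K ∧ CompactSpace K ∧ ∃ f : K → X, Continuous f ∧ Function.Surjective f

/-- A closed set `A` is a strong T-set: the boundary of each connected component of the
complement consists of exactly two points, and each such component is homeomorphic to the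
open unit interval `(0,1)`. -/
def IsStrongTSet {Y : Type*} [TopologicalSpace Y] (A : Set Y) : Prop :=
  IsClosed A ∧ ∀ x ∈ Aᶜ,
    (∃ a b : Y, a ≠ b ∧ frontier (connectedComponentIn Aᶜ x) = {a, b}) ∧
    Nonempty (↥(connectedComponentIn Aᶜ x) ≃ₜ ↥(Ioo (0:ℝ) 1))

/-- Souslin's Hypothesis: every ccc LOTS is separable. -/
def SouslinHypothesis : Prop :=
  ∀ (L : Type u) (lo : LinearOrder L) (tL : TopologicalSpace L),
    letI := lo; letI := tL;
    OrderTopology L → CCC L → TopologicalSpace.SeparableSpace L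

open TopologicalSpace Filter

lemma not_ccc_discrete {X : Type u} [TopologicalSpace X] (h : ¬ CCC X) :
    ∃ D : Set X, ¬D.Countable ∧ DiscreteTopology ↥D := by
  simp only [CCC, not_forall] at h
  obtain ⟨𝒰, hop, hdisj, hunc⟩ := h
  choose p hp using fun U : 𝒰 => (hop U U.2).2
  refine ⟨range p, ?_, ?_⟩
  · intro hc
    apply hunc
    have hinj : Function.Injective p := by
      intro U V hUV
      by_contra hne
      have : Disjoint (U : Set X) (V : Set X) :=
        hdisj U.2 V.2 (fun e => hne (Subtype.ext e))
      exact this.ne_of_mem (hp U) (hp V) hUV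
    have : (range p).Countable := hc
    have := (this.preimage hinj)
    simpa using this.image Subtype.val
  · rw [discreteTopology_iff_isOpen_singleton]
    rintro ⟨x, hx⟩
    obtain ⟨U, rfl⟩ := hx
    rw [isOpen_induced_iff]
    refine ⟨(U : Set X), (hop U U.2).1, ?_⟩
    ext ⟨y, hy⟩
    simp only [mem_preimage, mem_singleton_iff]
    constructor
    · intro hyU
      obtain ⟨V, rfl⟩ := hy
      have : ¬ Disjoint (U : Set X) (V : Set X) → U = V := by
        intro hnd
        by_contra hne
        exact hnd (hdisj U.2 V.2 (fun e => hne (Subtype.ext e)))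
      have hUV : U = V := this (fun hd => (hd.ne_of_mem hyU (hp V)) rfl)
      exact Subtype.ext (by rw [hUV])
    · intro he
      have : y = p U := congrArg Subtype.val he
      rw [this]; exact hp U

lemma exists_convex_nbhd {L : Type*} [LinearOrder L] [TopologicalSpace L] [OrderTopology L]
    {U : Set L} (hU : IsOpen U) {x : L} (hx : x ∈ U) :
    ∃ W : Set L, IsOpen W ∧ W.OrdConnected ∧ x ∈ W ∧ W ⊆ U := by
  have hbasis := isTopologicalBasis_of_subbasis
    (OrderTopology.topology_eq_generate_intervals (α := L))
  obtain ⟨W, hWmem, hxW, hWU⟩ := hbasis.exists_subset_of_mem_open hx hU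
  refine ⟨W, hbasis.isOpen hWmem, ?_, hxW, hWU⟩
  obtain ⟨f, ⟨hf, hfsub⟩, rfl⟩ := hWmem
  exact Set.ordConnected_sInter (fun s hs => by
    obtain ⟨a, ha | ha⟩ := hfsub hs
    · rw [ha]; exact ordConnected_Ioi
    · rw [ha]; exact ordConnected_Iio)

lemma finite_of_no_three {α : Type*} (S : Set α)
    (h : ∀ a ∈ S, ∀ b ∈ S, ∀ c ∈ S, a = b ∨ a = c ∨ b = c) : S.Finite := by
  rcases S.eq_empty_or_nonempty with rfl | ⟨a, ha⟩
  · exact finite_empty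
  by_cases h2 : ∃ b ∈ S, b ≠ a
  · obtain ⟨b, hb, hba⟩ := h2
    refine ((Set.finite_singleton b).insert a).subset ?_
    intro c hc
    rcases h a ha b hb c hc with h' | h' | h'
    · exact absurd h'.symm hba
    · exact Or.inl h'.symm
    · exact Or.inr h'.symm
  · push_neg at h2
    exact (Set.finite_singleton a).subset fun b hb => h2 b hb

lemma badLeft_countable {L : Type*} [LinearOrder L] [TopologicalSpace L] [OrderTopology L]
    {D U : Set L} (hD : D.Countable) (hDd : Dense D) (hU : IsOpen U) :
    {x | x ∈ U ∧ ¬∃ d ∈ D, d ≤ x ∧ Icc d x ⊆ U}.Countable := by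
  set B := {x | x ∈ U ∧ ¬∃ d ∈ D, d ≤ x ∧ Icc d x ⊆ U} with hB
  -- choose convex nbhds
  have hWex : ∀ x : ↥B, ∃ W : Set L, IsOpen W ∧ W.OrdConnected ∧ ↑x ∈ W ∧ W ⊆ U :=
    fun x => exists_convex_nbhd hU x.2.1
  choose W hWo hWc hWx hWU using hWex
  -- choose dense points
  have hdex : ∀ x : ↥B, ∃ d : L, d ∈ W x ∩ D := by
    intro x
    exact (hDd.inter_open_nonempty (W x) (hWo x) ⟨x, hWx x⟩)
  choose g hg using hdex
  have hgW : ∀ x, g x ∈ W x := fun x => (hg x).1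
  have hgD : ∀ x, g x ∈ D := fun x => (hg x).2
  -- each x < g x
  have hlt : ∀ x : ↥B, (x : L) < g x := by
    intro x
    by_contra hle
    push_neg at hle
    exact x.2.2 ⟨g x, hgD x, hle, subset_trans ((hWc x).out (hgW x) (hWx x)) (hWU x)⟩
  -- same g-value forces consecutive
  have key : ∀ u v : ↥B, g u = g v → (u : L) < v → Ioo (u : L) v = ∅ := by
    intro u v huv hlt'
    by_contra hne
    rw [← Ne, ← nonempty_iff_ne_empty] at hne
    obtain ⟨e, he⟩ := hDd.inter_open_nonempty _ isOpen_Ioo hne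
    obtain ⟨heIoo, heD⟩ := he
    -- v ∈ W u since v ∈ Icc u (g u)
    have hvW : (v : L) ∈ W u := (hWc u).out (hWx u) (hgW u) ⟨le_of_lt hlt', by
      rw [huv]; exact le_of_lt (hlt v)⟩
    have heW : e ∈ W u := (hWc u).out (hWx u) hvW ⟨le_of_lt heIoo.1, le_of_lt heIoo.2⟩
    exact v.2.2 ⟨e, heD, le_of_lt heIoo.2,
      subset_trans ((hWc u).out heW hvW) (hWU u)⟩
  -- fibers of g have at most two elements
  have hfib : ∀ d : L, {x : ↥B | g x = d}.Finite := by
    intro d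
    refine finite_of_no_three _ ?_
    intro a ha b hb c hc
    by_contra hcon
    push_neg at hcon
    obtain ⟨hab, hac, hbc⟩ := hcon
    have hab' : (a : L) ≠ b := fun e => hab (Subtype.ext e)
    have hac' : (a : L) ≠ c := fun e => hac (Subtype.ext e)
    have hbc' : (b : L) ≠ c := fun e => hbc (Subtype.ext e)
    -- among three distinct elements there exist x < y < z
    have : ∃ x y z : ↥B, g x = d ∧ g z = d ∧ (x : L) < y ∧ (y : L) < z := by
      rcases lt_trichotomy (a : L) b with h1 | h1 | h1
      · rcases lt_trichotomy (b : L) c with h2 | h2 | h2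
        · exact ⟨a, b, c, ha, hc, h1, h2⟩
        · exact absurd h2 hbc'
        · rcases lt_trichotomy (a : L) c with h3 | h3 | h3
          · exact ⟨a, c, b, ha, hb, h3, h2⟩
          · exact absurd h3 hac'
          · exact ⟨c, a, b, hc, hb, h3, h1⟩
      · exact absurd h1 hab'
      · rcases lt_trichotomy (a : L) c with h3 | h3 | h3
        · exact ⟨b, a, c, hb, hc, h1, h3⟩
        · exact absurd h3 hac'
        · rcases lt_trichotomy (b : L) c with h2 | h2 | h2
          · exact ⟨b, c, a, hb, ha, h2, h3⟩
          · exact absurd h2 hbc'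
          · exact ⟨c, b, a, hc, ha, h2, h1⟩
    obtain ⟨x, y, z, hx, hz, hxy, hyz⟩ := this
    have := key x z (hx.trans hz.symm) (hxy.trans hyz)
    rw [eq_empty_iff_forall_notMem] at this
    exact this y ⟨hxy, hyz⟩
  -- conclude countability
  have hDc : Countable ↥D := hD.to_subtype
  have : B = ⋃ d : ↥D, Subtype.val '' {x : ↥B | g x = (d : L)} := by
    ext x
    constructor
    · intro hx
      exact mem_iUnion.2 ⟨⟨g ⟨x, hx⟩, hgD ⟨x, hx⟩⟩, ⟨⟨x, hx⟩, rfl, rfl⟩⟩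
    · rintro hx
      obtain ⟨d, ⟨y, _, rfl⟩⟩ := mem_iUnion.1 hx
      exact y.2
  rw [this]
  exact countable_iUnion fun d => ((hfib d).image _).countable

lemma badRight_countable {L : Type*} [LinearOrder L] [TopologicalSpace L] [OrderTopology L]
    {D U : Set L} (hD : D.Countable) (hDd : Dense D) (hU : IsOpen U) :
    {x | x ∈ U ∧ ¬∃ d ∈ D, x ≤ d ∧ Icc x d ⊆ U}.Countable := by
  have h := badLeft_countable (L := Lᵒᵈ) (D := OrderDual.ofDual ⁻¹' D)
    (U := OrderDual.ofDual ⁻¹' U) (hD.preimage (fun a b h => h)) hDd.orderDual hU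
  have : {x | x ∈ U ∧ ¬∃ d ∈ D, x ≤ d ∧ Icc x d ⊆ U} =
      OrderDual.toDual ⁻¹'
        {x : Lᵒᵈ | x ∈ OrderDual.ofDual ⁻¹' U ∧
          ¬∃ d ∈ OrderDual.ofDual ⁻¹' D, d ≤ x ∧ Icc d x ⊆ OrderDual.ofDual ⁻¹' U} := by
    ext x
    simp only [mem_preimage, mem_setOf_eq]
    constructor
    · rintro ⟨hxU, hno⟩
      refine ⟨hxU, fun ⟨d, hdD, hdx, hIcc⟩ => hno ⟨OrderDual.ofDual d, hdD, hdx, ?_⟩⟩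
      intro y hy
      exact hIcc (a := OrderDual.toDual y) ⟨hy.2, hy.1⟩
    · rintro ⟨hxU, hno⟩
      refine ⟨hxU, fun ⟨d, hdD, hdx, hIcc⟩ => hno ⟨OrderDual.toDual d, hdD, hdx, ?_⟩⟩
      intro y hy
      exact hIcc (a := OrderDual.ofDual y) ⟨hy.2, hy.1⟩
  rw [this]
  exact h.preimage (fun a b hh => hh)

lemma isGδ_of_isClosed_sepLOTS {L : Type*} [LinearOrder L] [TopologicalSpace L]
    [OrderTopology L] [SeparableSpace L] {A : Set L} (hA : IsClosed A) : IsGδ A := by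
  obtain ⟨D, hDc, hDd⟩ := exists_countable_dense L
  set U := Aᶜ with hUdef
  have hU : IsOpen U := hA.isOpen_compl
  set BL := {x | x ∈ U ∧ ¬∃ d ∈ D, d ≤ x ∧ Icc d x ⊆ U} with hBL
  set BR := {x | x ∈ U ∧ ¬∃ d ∈ D, x ≤ d ∧ Icc x d ⊆ U} with hBR
  set P : Set (L × L) := {p | p.1 ∈ D ∧ p.2 ∈ D ∧ Icc p.1 p.2 ⊆ U} with hP
  set 𝒞 : Set (Set L) := (fun p : L × L => Icc p.1 p.2) '' P ∪ (fun x => {x}) '' (BL ∪ BR)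
    with h𝒞
  have h𝒞c : 𝒞.Countable := by
    refine Set.Countable.union (Set.Countable.image ?_ _) (Set.Countable.image ?_ _)
    · exact Set.Countable.mono (fun p hp => Set.mem_prod.2 ⟨hp.1, hp.2.1⟩) (hDc.prod hDc)
    · exact (badLeft_countable hDc hDd hU).union (badRight_countable hDc hDd hU)
  have h𝒞closed : ∀ C ∈ 𝒞, IsClosed C := by
    rintro C (⟨p, _, rfl⟩ | ⟨x, _, rfl⟩)
    · exact isClosed_Icc
    · exact isClosed_singleton
  have hcov : U = ⋃₀ 𝒞 := by
    apply Set.Subset.antisymm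
    · intro x hx
      by_cases hxL : x ∈ BL
      · exact ⟨{x}, Or.inr ⟨x, Or.inl hxL, rfl⟩, rfl⟩
      by_cases hxR : x ∈ BR
      · exact ⟨{x}, Or.inr ⟨x, Or.inr hxR, rfl⟩, rfl⟩
      rw [hBL, mem_setOf_eq, not_and, not_not] at hxL
      rw [hBR, mem_setOf_eq, not_and, not_not] at hxR
      obtain ⟨d, hdD, hdx, hIl⟩ := hxL hx
      obtain ⟨d', hd'D, hxd', hIr⟩ := hxR hx
      refine ⟨Icc d d', Or.inl ⟨(d, d'), ⟨hdD, hd'D, ?_⟩, rfl⟩, hdx, hxd'⟩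
      intro y hy
      rcases le_total y x with h | h
      · exact hIl ⟨hy.1, h⟩
      · exact hIr ⟨h, hy.2⟩
    · rintro x ⟨C, (⟨p, hp, rfl⟩ | ⟨z, hz, rfl⟩), hxC⟩
      · exact hp.2.2 hxC
      · rw [mem_singleton_iff] at hxC
        subst hxC
        rcases hz with h | h
        · exact h.1
        · exact h.1
  have : A = ⋂₀ (compl '' 𝒞) := by
    rw [← compl_sUnion, ← hcov, hUdef, compl_compl]
  rw [this]
  exact .sInter (fun t ⟨C, hC, hCe⟩ => hCe ▸ (h𝒞closed C hC).isOpen_compl.isGδ)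
    (h𝒞c.image _)

lemma topology_eq_of_le_of_compact {T : Type*} (t t' : TopologicalSpace T)
    (hle : t ≤ t') (hc : @CompactSpace T t) (h2 : @T2Space T t') : t = t' := by
  refine le_antisymm hle ?_
  rw [TopologicalSpace.le_def]
  intro U hU
  have hcpt : @IsCompact T t Uᶜ :=
    @IsClosed.isCompact T t Uᶜ hc ((@isClosed_compl_iff T t U).mpr hU)
  have hcont : @Continuous T T t t' id := continuous_id_of_le hle
  have hc' : @IsCompact T t' Uᶜ := by
    have := @IsCompact.image T T t t' Uᶜ id hcpt hcont
    simpa using this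
  exact (@isClosed_compl_iff T t' U).mp (@IsCompact.isClosed T t' h2 Uᶜ hc')

lemma orderTopology_of_compact_of_rays_open {T : Type*} [LinearOrder T]
    (t : TopologicalSpace T) (hcs : @CompactSpace T t)
    (hopen : ∀ a : T, t.IsOpen (Ioi a) ∧ t.IsOpen (Iio a)) :
    @OrderTopology T t _ := by
  refine ⟨topology_eq_of_le_of_compact _ _ ?_ hcs ?_⟩
  · apply le_generateFrom
    rintro S ⟨a, rfl | rfl⟩
    · exact (hopen a).1
    · exact (hopen a).2
  · exact @OrderClosedTopology.to_t2Space _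
      (TopologicalSpace.generateFrom { S : Set T | ∃ a, S = Ioi a ∨ S = Iio a }) _
      (@OrderTopology.to_orderClosedTopology _
        (TopologicalSpace.generateFrom { S : Set T | ∃ a, S = Ioi a ∨ S = Iio a }) _
        (@OrderTopology.mk _
          (TopologicalSpace.generateFrom { S : Set T | ∃ a, S = Ioi a ∨ S = Iio a }) _ rfl))

lemma orderTopology_closed_subtype {K : Type*} [LinearOrder K] [TopologicalSpace K]
    [OrderTopology K] [CompactSpace K] {s : Set K} (hs : IsClosed s) :
    OrderTopology ↥s := by
  refine orderTopology_of_compact_of_rays_open _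
    (isCompact_iff_compactSpace.mp hs.isCompact) ?_
  intro a
  constructor
  · have h1 : (Ioi a : Set ↥s) = Subtype.val ⁻¹' (Ioi (a : K)) := by ext x; exact Iff.rfl
    rw [h1]; exact isOpen_Ioi.preimage continuous_subtype_val
  · have h1 : (Iio a : Set ↥s) = Subtype.val ⁻¹' (Iio (a : K)) := by ext x; exact Iff.rfl
    rw [h1]; exact isOpen_Iio.preimage continuous_subtype_val

lemma isCountablyGenerated_nhds_of_gdelta_point {X : Type*} [TopologicalSpace X]
    [CompactSpace X] [T2Space X] {x : X} (h : IsGδ ({x} : Set X)) :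
    (𝓝 x).IsCountablyGenerated := by
  -- get an ℕ-indexed family of open sets intersecting to {x}
  obtain ⟨T, hTopen, hTc, hTeq⟩ := h
  have hU : ∃ U : ℕ → Set X, (∀ n, IsOpen (U n)) ∧ (⋂ n, U n) = {x} := by
    rcases T.eq_empty_or_nonempty with rfl | hTne
    · have hx' : ({x} : Set X) = univ := by rw [hTeq]; exact sInter_empty
      exact ⟨fun _ => univ, fun _ => isOpen_univ, by simp [hx']⟩
    · obtain ⟨g, hg⟩ := hTc.exists_eq_range hTne
      refine ⟨g, fun n => hTopen _ (by rw [hg]; exact mem_range_self n), ?_⟩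
      rw [hTeq, hg, sInter_range]
  obtain ⟨U, hUo, hUx⟩ := hU
  have hxU : ∀ n, x ∈ U n := fun n => by
    have : x ∈ ⋂ n, U n := by rw [hUx]; exact rfl
    exact mem_iInter.1 this n
  -- shrinking step
  have H : ∀ V : Set X, IsOpen V → x ∈ V → ∀ n : ℕ,
      ∃ W, IsOpen W ∧ x ∈ W ∧ closure W ⊆ V ∩ U n := by
    intro V hV hxV n
    have hmem : V ∩ U n ∈ 𝓝 x := (hV.inter (hUo n)).mem_nhds ⟨hxV, hxU n⟩
    obtain ⟨C, hC𝓝, hCcl, hCsub⟩ := exists_mem_nhds_isClosed_subset hmem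
    exact ⟨interior C, isOpen_interior, mem_interior_iff_mem_nhds.2 hC𝓝,
      subset_trans (closure_minimal interior_subset hCcl) hCsub⟩
  choose! F hF1 hF2 hF3 using H
  let seq : ℕ → Set X := fun n => Nat.rec univ (fun m prev => F prev m) n
  have hseqS : ∀ n, seq (n + 1) = F (seq n) n := fun n => rfl
  have hinv : ∀ n, IsOpen (seq n) ∧ x ∈ seq n := by
    intro n
    induction n with
    | zero => exact ⟨isOpen_univ, mem_univ x⟩
    | succ m ih =>
      rw [hseqS m]
      exact ⟨hF1 _ ih.1 ih.2 m, hF2 _ ih.1 ih.2 m⟩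
  have hsub : ∀ n, closure (seq (n + 1)) ⊆ seq n ∩ U n := by
    intro n
    rw [hseqS n]
    exact hF3 _ (hinv n).1 (hinv n).2 n
  -- seq is a neighborhood basis
  have hbasis : (𝓝 x).HasBasis (fun _ : ℕ => True) seq := by
    rw [Filter.hasBasis_iff]
    intro t
    constructor
    · intro ht
      obtain ⟨O, hOsub, hOopen, hxO⟩ := mem_nhds_iff.1 ht
      by_contra hno
      push_neg at hno
      have hnon : ∀ n, (closure (seq (n + 1)) ∩ Oᶜ).Nonempty := by
        intro n
        have hns := hno (n + 1) trivial
        rw [not_subset] at hns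
        obtain ⟨y, hy1, hy2⟩ := hns
        exact ⟨y, subset_closure hy1, fun hyO => hy2 (hOsub hyO)⟩
      have hanti : Antitone (fun n => closure (seq (n + 1)) ∩ Oᶜ) := by
        apply antitone_nat_of_succ_le
        intro n
        apply inter_subset_inter_left
        exact (hsub (n+1)).trans (inter_subset_left.trans subset_closure)
      have hne := IsCompact.nonempty_iInter_of_directed_nonempty_isCompact_isClosed
        (fun n => closure (seq (n + 1)) ∩ Oᶜ) hanti.directed_ge hnon
        (fun n => (isClosed_closure.inter (hOopen.isClosed_compl)).isCompact)
        (fun n => isClosed_closure.inter hOopen.isClosed_compl)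
      obtain ⟨y, hy⟩ := hne
      have hyi := mem_iInter.1 hy
      have hyx : y = x := by
        have : y ∈ ⋂ n, U n := mem_iInter.2 fun n =>
          ((hsub n) (hyi n).1).2
        rw [hUx] at this
        exact this
      exact (hyi 0).2 (by rw [hyx]; exact hxO)
    · rintro ⟨n, -, hsn⟩
      exact mem_nhds_iff.2 ⟨seq n, hsn, (hinv n).1, (hinv n).2⟩
  exact hbasis.isCountablyGenerated

lemma secondCountable_of_countable_firstCountable {X : Type*} [TopologicalSpace X]
    [Countable X] [FirstCountableTopology X] : SecondCountableTopology X := by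
  have h : ∀ x : X, ∃ s : ℕ → Set X, (∀ n, s n ∈ 𝓝 x) ∧ ∀ t ∈ 𝓝 x, ∃ n, s n ⊆ t := by
    intro x
    obtain ⟨s, hs⟩ := (𝓝 x).exists_antitone_basis
    exact ⟨s, fun n => hs.toHasBasis.mem_of_mem trivial, fun t ht => by
      obtain ⟨n, -, hn⟩ := hs.toHasBasis.mem_iff.1 ht
      exact ⟨n, hn⟩⟩
  choose s hs1 hs2 using h
  refine TopologicalSpace.IsTopologicalBasis.secondCountableTopology
    (b := range (fun p : X × ℕ => interior (s p.1 p.2))) ?_ (countable_range _)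
  apply TopologicalSpace.isTopologicalBasis_of_isOpen_of_nhds
  · rintro u ⟨p, rfl⟩
    exact isOpen_interior
  · intro x u hxu hu
    obtain ⟨n, hn⟩ := hs2 x u (hu.mem_nhds hxu)
    exact ⟨interior (s x n), ⟨(x, n), rfl⟩, mem_interior_iff_mem_nhds.2 (hs1 x n),
      interior_subset.trans hn⟩

theorem SH_uncountable_discrete (hSH : SouslinHypothesis.{u}) (X : Type u)
    [TopologicalSpace X] [T2Space X] [CompactSpace X]
    (hX : ContinuousImageOfCompactLOTS X)
    (hnd : ¬∃ D : Set X, Dense D ∧ TopologicalSpace.MetrizableSpace ↥D) :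
    ∃ D : Set X, ¬D.Countable ∧ DiscreteTopology ↥D := by
  by_cases hccc : CCC X
  · exfalso
    apply hnd
    obtain ⟨K, lo, tK, h⟩ := hX
    letI := lo; letI := tK
    obtain ⟨hOT, hcK, f, hfc, hfs⟩ := h
    -- Zorn: minimal closed subset mapping onto X
    set S : Set (Set K) := {A | IsClosed A ∧ f '' A = univ} with hS
    have hzorn : ∃ m, Minimal (· ∈ S) m := by
      apply zorn_superset
      intro c hcS hchain
      rcases c.eq_empty_or_nonempty with rfl | hcne
      · exact ⟨univ, ⟨isClosed_univ, by rw [image_univ, hfs.range_eq]⟩, by simp⟩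
      refine ⟨⋂₀ c, ⟨isClosed_sInter (fun A hA => (hcS hA).1), ?_⟩, fun A hA => sInter_subset_of_mem hA⟩
      apply Set.eq_univ_of_forall
      intro x
      haveI : Nonempty ↥c := hcne.to_subtype
      have hdir : Directed (· ⊇ ·) (fun A : ↥c => (A : Set K) ∩ f ⁻¹' {x}) := by
        intro A B
        rcases hchain.total A.2 B.2 with hAB | hAB
        · exact ⟨A, Subset.rfl, inter_subset_inter_left _ hAB⟩
        · exact ⟨B, inter_subset_inter_left _ hAB, Subset.rfl⟩
      have hne := IsCompact.nonempty_iInter_of_directed_nonempty_isCompact_isClosed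
        (fun A : ↥c => (A : Set K) ∩ f ⁻¹' {x}) hdir
        (fun A => by
          have := (hcS A.2).2
          have hx : x ∈ f '' (A : Set K) := by rw [this]; trivial
          obtain ⟨k, hk, hfk⟩ := hx
          exact ⟨k, hk, hfk⟩)
        (fun A => (((hcS A.2).1.inter (isClosed_singleton.preimage hfc))).isCompact)
        (fun A => (hcS A.2).1.inter (isClosed_singleton.preimage hfc))
      obtain ⟨k, hk⟩ := hne
      have hk' := mem_iInter.1 hk
      refine ⟨k, ?_, (hk' ⟨_, hcne.choose_spec⟩).2⟩
      exact fun A hA => (hk' ⟨A, hA⟩).1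
    obtain ⟨M, hMmin⟩ := hzorn
    have hMcl : IsClosed M := hMmin.prop.1
    have hMim : f '' M = univ := hMmin.prop.2
    haveI : CompactSpace ↥M := isCompact_iff_compactSpace.mp hMcl.isCompact
    haveI hOTM : OrderTopology ↥M := orderTopology_closed_subtype hMcl
    set g : ↥M → X := fun m => f m with hg
    have hgc : Continuous g := hfc.comp continuous_subtype_val
    have hgs : Function.Surjective g := by
      intro x
      have : x ∈ f '' M := by rw [hMim]; trivial
      obtain ⟨k, hk, hfk⟩ := this
      exact ⟨⟨k, hk⟩, hfk⟩
    -- irreducibility from minimality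
    have hirr : ∀ B : Set ↥M, IsClosed B → g '' B = univ → B = univ := by
      intro B hB hBim
      have hBK : IsClosed (Subtype.val '' B) :=
        hMcl.isClosedEmbedding_subtypeVal.isClosedMap _ hB
      have hBS : Subtype.val '' B ∈ S := by
        refine ⟨hBK, ?_⟩
        rw [← image_comp]
        exact hBim
      have hsub : Subtype.val '' B ⊆ M := by
        rintro _ ⟨b, _, rfl⟩; exact b.2
      have hMB := hMmin.2 hBS hsub
      apply Set.eq_univ_of_forall
      intro m
      have : (m : K) ∈ Subtype.val '' B := hMB m.2
      obtain ⟨b, hb, hbe⟩ := this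
      rwa [show b = m from Subtype.ext hbe] at hb
    -- CCC for M
    have hcccM : CCC ↥M := by
      intro 𝒰 hop hdisj
      set star : Set ↥M → Set X := fun U => (g '' Uᶜ)ᶜ with hstar
      have hstar_open : ∀ U ∈ 𝒰, IsOpen (star U) := by
        intro U hU
        exact (((hop U hU).1.isClosed_compl.isCompact.image hgc).isClosed).isOpen_compl
      have hstar_ne : ∀ U ∈ 𝒰, (star U).Nonempty := by
        intro U hU
        rw [nonempty_iff_ne_empty]
        intro he
        have : g '' Uᶜ = univ := by
          have := congrArg compl he
          rwa [compl_compl, compl_empty] at this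
        have := hirr Uᶜ (hop U hU).1.isClosed_compl this
        have hUe : U = ∅ := by
          have := congrArg compl this
          rwa [compl_compl, compl_univ] at this
        exact (hop U hU).2.ne_empty hUe
      have hpre : ∀ U, g ⁻¹' (star U) ⊆ U := by
        intro U k hk
        by_contra hkU
        exact hk ⟨k, hkU, rfl⟩
      have hstar_disj : ∀ U ∈ 𝒰, ∀ V ∈ 𝒰, U ≠ V → Disjoint (star U) (star V) := by
        intro U hU V hV hUV
        rw [disjoint_left]
        intro x hxU hxV
        obtain ⟨k, rfl⟩ := hgs x
        have h1 : k ∈ U := hpre U hxU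
        have h2 : k ∈ V := hpre V hxV
        exact (hdisj hU hV hUV).ne_of_mem h1 h2 rfl
      have him : (star '' 𝒰).Countable := by
        apply hccc
        · rintro _ ⟨U, hU, rfl⟩
          exact ⟨hstar_open U hU, hstar_ne U hU⟩
        · rintro _ ⟨U, hU, rfl⟩ _ ⟨V, hV, rfl⟩ hne
          exact hstar_disj U hU V hV (fun e => hne (by rw [e]))
      refine Set.MapsTo.countable_of_injOn (mapsTo_image star 𝒰) ?_ him
      intro U hU V hV he
      by_contra hne
      have hd := hstar_disj U hU V hV hne
      rw [he] at hd
      exact (hstar_ne V hV).ne_empty (disjoint_self.1 hd)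
    -- Souslin's hypothesis gives separability
    haveI hsep : SeparableSpace ↥M := hSH ↥M _ _ hOTM hcccM
    -- every point of X is Gδ
    have hGδ : ∀ x : X, IsGδ ({x} : Set X) := by
      intro x
      have hfib : IsClosed (g ⁻¹' {x}) := isClosed_singleton.preimage hgc
      obtain ⟨T', hT'o, hT'c, hT'eq⟩ := isGδ_of_isClosed_sepLOTS hfib
      refine ⟨(fun u : Set ↥M => (g '' uᶜ)ᶜ) '' T', ?_, hT'c.image _, ?_⟩
      · rintro _ ⟨u, hu, rfl⟩
        exact ((hT'o u hu).isClosed_compl.isCompact.image hgc).isClosed.isOpen_compl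
      · apply Subset.antisymm
        · intro y hy
          rw [mem_singleton_iff] at hy
          subst hy
          rintro V ⟨u, hu, rfl⟩
          rintro ⟨k, hk, hfk⟩
          apply hk
          have hmem : k ∈ g ⁻¹' {y} := by
            rw [mem_preimage, mem_singleton_iff]
            exact hfk
          rw [hT'eq] at hmem
          exact hmem u hu
        · intro y hy
          obtain ⟨k, rfl⟩ := hgs y
          have hkfib : k ∈ g ⁻¹' {x} := by
            rw [hT'eq]
            intro u hu
            by_contra hku
            exact hy _ ⟨u, hu, rfl⟩ ⟨k, hku, rfl⟩
          exact hkfib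
    haveI : FirstCountableTopology X :=
      ⟨fun x => isCountablyGenerated_nhds_of_gdelta_point (hGδ x)⟩
    -- dense metrizable subspace
    obtain ⟨DT, hDTc, hDTd⟩ := exists_countable_dense ↥M
    refine ⟨g '' DT, ?_, ?_⟩
    · rw [dense_iff_closure_eq]
      apply Subset.antisymm (subset_univ _)
      have h1 : univ = g '' closure DT := by
        rw [hDTd.closure_eq, image_univ, hgs.range_eq]
      rw [h1]
      exact (image_closure_subset_closure_image hgc)
    · haveI : Countable ↥(g '' DT) := (hDTc.image g).to_subtype
      haveI := secondCountable_of_countable_firstCountable (X := ↥(g '' DT))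
      infer_instance
  · exact not_ccc_discrete hccc
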